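/- arXiv:2301.09133 — 6 statements merged into one kernel-verified Lean document; each statement's English description precedes it below -/
import Mathlib

section
/- Let (D,*,∘) be a digroup, B a subdigroup (a subset that is a subgroup of both (D,*) and (D,∘)), and I an ideal of D. If D = B ∘ I and B ∩ I = {1}, then D = B * I, i.e., every element of D can be written as b * i with b ∈ B and i ∈ I. -/
structure Digroup (D : Type*) where
  mul : D → D → D
  inv : D → D
  cmul : D → D → D
  cinv : D → D
  one : D
  mul_assoc : ∀ a b c, mul (mul a b) c = mul a (mul b c)
  one_mul : ∀ a, mul one a = a
  mul_one : ∀ a, mul a one = a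
  inv_mul : ∀ a, mul (inv a) a = one
  mul_inv : ∀ a, mul a (inv a) = one
  cmul_assoc : ∀ a b c, cmul (cmul a b) c = cmul a (cmul b c)
  one_cmul : ∀ a, cmul one a = a
  cmul_one : ∀ a, cmul a one = a
  cinv_cmul : ∀ a, cmul (cinv a) a = one
  cmul_cinv : ∀ a, cmul a (cinv a) = one

/-- The map λ_a : b ↦ a⁻* * (a ∘ b). -/
def Digroup.lam {D : Type*} (G : Digroup D) (a b : D) : D :=
  G.mul (G.inv a) (G.cmul a b)

/-- The left skew brace condition. -/
def Digroup.IsSkewBrace {D : Type*} (G : Digroup D) : Prop :=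
  ∀ a b c, G.cmul a (G.mul b c) =
    G.mul (G.mul (G.cmul a b) (G.inv a)) (G.cmul a c)

/-- A subdigroup: a subset which is a subgroup for both operations. -/
def Digroup.IsSubdigroup {D : Type*} (G : Digroup D) (B : Set D) : Prop :=
  G.one ∈ B ∧ (∀ x ∈ B, ∀ y ∈ B, G.mul x y ∈ B) ∧ (∀ x ∈ B, G.inv x ∈ B) ∧
    (∀ x ∈ B, ∀ y ∈ B, G.cmul x y ∈ B) ∧ (∀ x ∈ B, G.cinv x ∈ B)

/-- An ideal: a normal subgroup of both groups with a * I = a ∘ I for all a. -/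
def Digroup.IsIdeal {D : Type*} (G : Digroup D) (I : Set D) : Prop :=
  G.one ∈ I ∧ (∀ x ∈ I, ∀ y ∈ I, G.mul x y ∈ I) ∧ (∀ x ∈ I, G.inv x ∈ I) ∧
    (∀ x ∈ I, ∀ y ∈ I, G.cmul x y ∈ I) ∧ (∀ x ∈ I, G.cinv x ∈ I) ∧
    (∀ a, ∀ x ∈ I, G.mul (G.mul a x) (G.inv a) ∈ I) ∧
    (∀ a, ∀ x ∈ I, G.cmul (G.cmul a x) (G.cinv a) ∈ I) ∧
    (∀ a, (fun x => G.mul a x) '' I = (fun x => G.cmul a x) '' I)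

/-- If D = B ∘ I and B ∩ I = {1} for a subdigroup B and an ideal I, then D = B * I. -/
theorem semidirect_circ_implies_star {D : Type*} (G : Digroup D) (B I : Set D)
    (hB : G.IsSubdigroup B) (hI : G.IsIdeal I)
    (hgen : ∀ a, ∃ b ∈ B, ∃ i ∈ I, a = G.cmul b i)
    (hint : B ∩ I = {G.one}) :
    ∀ a, ∃ b ∈ B, ∃ i ∈ I, a = G.mul b i := by
  intro a
  obtain ⟨b, hb, i, hi, rfl⟩ := hgen a
  have h := hI.2.2.2.2.2.2.2 b
  have hmem : G.cmul b i ∈ (fun x => G.cmul b x) '' I := ⟨i, hi, rfl⟩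
  rw [← h] at hmem
  obtain ⟨j, hj, hje⟩ := hmem
  exact ⟨b, hb, j, hj, hje.symm⟩
end

section
/- Let (D,*,∘) be a digroup, B a subdigroup and I an ideal of D with D = B ∘ I and B ∩ I = {1}. Then the map e : D → D sending a = b ∘ i (with b ∈ B, i ∈ I) to b is an endomorphism of the group (D,*), i.e., e(a₁ * a₂) = e(a₁) * e(a₂) for all a₁, a₂ ∈ D. -/
section Aux
variable {D : Type*} (G : Digroup D)

lemma Digroup.mul_inv_cancel_left (a x : D) : G.mul a (G.mul (G.inv a) x) = x := by
  rw [← G.mul_assoc, G.mul_inv, G.one_mul]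

lemma Digroup.inv_inv (a : D) : G.inv (G.inv a) = a := by
  have h : G.mul a (G.mul (G.inv a) (G.inv (G.inv a))) = a := by
    rw [G.mul_inv, G.mul_one]
  rw [G.mul_inv_cancel_left] at h
  exact h.symm ▸ rfl

lemma Digroup.cmul_left_cancel {a x y : D} (h : G.cmul a x = G.cmul a y) : x = y := by
  have := congrArg (G.cmul (G.cinv a)) h
  rwa [← G.cmul_assoc, ← G.cmul_assoc, G.cinv_cmul, G.one_cmul, G.one_cmul] at this

/-- uniqueness of decomposition -/
lemma Digroup.uniq (B I : Set D) (hB : G.IsSubdigroup B) (hI : G.IsIdeal I)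
    (hint : B ∩ I = {G.one}) {b b' i i' : D} (hb : b ∈ B) (hb' : b' ∈ B)
    (hi : i ∈ I) (hi' : i' ∈ I) (h : G.cmul b i = G.cmul b' i') : b = b' := by
  obtain ⟨hB1, hBm, hBi, hBc, hBci⟩ := hB
  obtain ⟨hI1, hIm, hIi, hIc, hIci, _, _, _⟩ := hI
  set x := G.cmul (G.cinv b') b with hxdef
  have hxB : x ∈ B := hBc _ (hBci _ hb') _ hb
  have hx : G.cmul x i = i' := by
    rw [hxdef, G.cmul_assoc, h, ← G.cmul_assoc, G.cinv_cmul, G.one_cmul]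
  have hxI : x ∈ I := by
    have : x = G.cmul i' (G.cinv i) := by
      rw [← hx, G.cmul_assoc, G.cmul_cinv, G.cmul_one]
    rw [this]; exact hIc _ hi' _ (hIci _ hi)
  have hx1 : x = G.one := by
    have : x ∈ B ∩ I := ⟨hxB, hxI⟩
    rwa [hint] at this
  have := congrArg (G.cmul b') hx1
  rwa [hxdef, ← G.cmul_assoc, G.cmul_cinv, G.one_cmul, G.cmul_one] at this

/-- a ∘ i = a * i' for some i' ∈ I -/
lemma Digroup.c_to_m (I : Set D) (hI : G.IsIdeal I) (a : D) {i : D} (hi : i ∈ I) :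
    ∃ i' ∈ I, G.cmul a i = G.mul a i' := by
  have h8 := hI.2.2.2.2.2.2.2 a
  have : G.cmul a i ∈ (fun x => G.cmul a x) '' I := ⟨i, hi, rfl⟩
  rw [← h8] at this
  obtain ⟨i', hi', he⟩ := this
  exact ⟨i', hi', he.symm⟩

/-- a * i = a ∘ i' for some i' ∈ I -/
lemma Digroup.m_to_c (I : Set D) (hI : G.IsIdeal I) (a : D) {i : D} (hi : i ∈ I) :
    ∃ i' ∈ I, G.mul a i = G.cmul a i' := by
  have h8 := hI.2.2.2.2.2.2.2 a
  have : G.mul a i ∈ (fun x => G.mul a x) '' I := ⟨i, hi, rfl⟩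
  rw [h8] at this
  obtain ⟨i', hi', he⟩ := this
  exact ⟨i', hi', he.symm⟩

end Aux

/-- If D = B ∘ I, B ∩ I = {1}, the projection e : b ∘ i ↦ b is an endomorphism of (D,*). -/
theorem projection_star_endomorphism {D : Type*} (G : Digroup D) (B I : Set D)
    (hB : G.IsSubdigroup B) (hI : G.IsIdeal I)
    (hgen : ∀ a, ∃ b ∈ B, ∃ i ∈ I, a = G.cmul b i)
    (hint : B ∩ I = {G.one})
    (e : D → D)
    (he : ∀ a, e a ∈ B ∧ ∃ i ∈ I, a = G.cmul (e a) i) :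
    ∀ a₁ a₂, e (G.mul a₁ a₂) = G.mul (e a₁) (e a₂) := by
  intro a₁ a₂
  obtain ⟨hb₁, i₁, hi₁, ha₁⟩ := he a₁
  obtain ⟨hb₂, i₂, hi₂, ha₂⟩ := he a₂
  set b₁ := e a₁
  set b₂ := e a₂
  obtain ⟨i₁', hi₁', h1⟩ := G.c_to_m I hI b₁ hi₁
  obtain ⟨i₂', hi₂', h2⟩ := G.c_to_m I hI b₂ hi₂
  -- k = b₂⁻¹ * i₁' * b₂ ∈ I
  have hkI : G.mul (G.mul (G.inv b₂) i₁') (G.inv (G.inv b₂)) ∈ I :=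
    hI.2.2.2.2.2.1 (G.inv b₂) i₁' hi₁'
  rw [G.inv_inv] at hkI
  set k := G.mul (G.mul (G.inv b₂) i₁') b₂ with hk
  have hjI : G.mul k i₂' ∈ I := hI.2.1 _ hkI _ hi₂'
  set j := G.mul k i₂' with hj
  have key : G.mul a₁ a₂ = G.mul (G.mul b₁ b₂) j := by
    rw [ha₁, ha₂, h1, h2, hj, hk]
    simp only [G.mul_assoc]
    rw [G.mul_inv_cancel_left]
  obtain ⟨j', hj', hjc⟩ := G.m_to_c I hI (G.mul b₁ b₂) hjI
  have hbb : G.mul b₁ b₂ ∈ B := hB.2.1 _ hb₁ _ hb₂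
  obtain ⟨hbe, i₀, hi₀, ha₀⟩ := he (G.mul a₁ a₂)
  exact G.uniq B I hB hI hint hbe hbb hi₀ hj'
    (by rw [← ha₀, key, hjc])
end

section
/- Let (D,*,∘) be a digroup, B a subdigroup and I an ideal of D with D = B * I and B ∩ I = {1}. Then the map e : D → D sending a = b * i (with b ∈ B, i ∈ I) to b is an endomorphism of the group (D,∘), i.e., e(a₁ ∘ a₂) = e(a₁) ∘ e(a₂) for all a₁, a₂ ∈ D. -/
lemma Digroup.cinv_cinv' {D : Type*} (G : Digroup D) (a : D) :
    G.cinv (G.cinv a) = a := by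
  have h := G.cmul_assoc a (G.cinv a) (G.cinv (G.cinv a))
  simp only [G.cmul_cinv, G.one_cmul, G.cmul_one] at h
  exact h

lemma Digroup.factor_unique {D : Type*} (G : Digroup D) {B I : Set D}
    (hB : G.IsSubdigroup B) (hI : G.IsIdeal I) (hint : B ∩ I = {G.one})
    {b b' i i' : D} (hb : b ∈ B) (hb' : b' ∈ B) (hi : i ∈ I) (hi' : i' ∈ I)
    (heq : G.mul b i = G.mul b' i') : b = b' := by
  have hxB : G.mul (G.inv b') b ∈ B := hB.2.1 _ (hB.2.2.1 _ hb') _ hb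
  have h1 : G.mul (G.mul (G.inv b') b) i = i' := by
    have h := congrArg (G.mul (G.inv b')) heq
    rw [← G.mul_assoc, ← G.mul_assoc, G.inv_mul, G.one_mul] at h
    exact h
  have hxI : G.mul (G.inv b') b ∈ I := by
    have h2 : G.mul (G.inv b') b = G.mul i' (G.inv i) := by
      rw [← h1, G.mul_assoc, G.mul_inv, G.mul_one]
    rw [h2]
    exact hI.2.1 _ hi' _ (hI.2.2.1 _ hi)
  have hx1 : G.mul (G.inv b') b = G.one := by
    have hmem : G.mul (G.inv b') b ∈ B ∩ I := ⟨hxB, hxI⟩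
    rwa [hint] at hmem
  have h := congrArg (G.mul b') hx1
  rwa [← G.mul_assoc, G.mul_inv, G.one_mul, G.mul_one] at h

/-- If D = B * I, B ∩ I = {1}, the projection e : b * i ↦ b is an endomorphism of (D,∘). -/
theorem projection_circ_endomorphism {D : Type*} (G : Digroup D) (B I : Set D)
    (hB : G.IsSubdigroup B) (hI : G.IsIdeal I)
    (hgen : ∀ a, ∃ b ∈ B, ∃ i ∈ I, a = G.mul b i)
    (hint : B ∩ I = {G.one})
    (e : D → D)
    (he : ∀ a, e a ∈ B ∧ ∃ i ∈ I, a = G.mul (e a) i) :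
    ∀ a₁ a₂, e (G.cmul a₁ a₂) = G.cmul (e a₁) (e a₂) := by
  have coset : ∀ a, ∀ i ∈ I, ∃ j ∈ I, G.mul a i = G.cmul a j := by
    intro a i hi
    have h := hI.2.2.2.2.2.2.2 a
    have hm : G.mul a i ∈ (fun x => G.cmul a x) '' I := by
      rw [← h]; exact ⟨i, hi, rfl⟩
    obtain ⟨j, hj, hj2⟩ := hm
    exact ⟨j, hj, hj2.symm⟩
  have coset' : ∀ a, ∀ j ∈ I, ∃ i ∈ I, G.cmul a j = G.mul a i := by
    intro a j hj
    have h := hI.2.2.2.2.2.2.2 a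
    have hm : G.cmul a j ∈ (fun x => G.mul a x) '' I := by
      rw [h]; exact ⟨j, hj, rfl⟩
    obtain ⟨i, hi, hi2⟩ := hm
    exact ⟨i, hi, hi2.symm⟩
  intro a₁ a₂
  obtain ⟨hb1, i1, hi1, hf1⟩ := he a₁
  obtain ⟨hb2, i2, hi2, hf2⟩ := he a₂
  obtain ⟨hb3, i3, hi3, hf3⟩ := he (G.cmul a₁ a₂)
  obtain ⟨j1, hj1, hcj1⟩ := coset (e a₁) i1 hi1
  obtain ⟨j2, hj2, hcj2⟩ := coset (e a₂) i2 hi2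
  have ha1 : a₁ = G.cmul (e a₁) j1 := hf1.trans hcj1
  have ha2 : a₂ = G.cmul (e a₂) j2 := hf2.trans hcj2
  have hk0 : G.cmul (G.cmul (G.cinv (e a₂)) j1) (e a₂) ∈ I := by
    have h := hI.2.2.2.2.2.2.1 (G.cinv (e a₂)) j1 hj1
    rwa [G.cinv_cinv'] at h
  have hk : G.cmul (G.cmul (G.cmul (G.cinv (e a₂)) j1) (e a₂)) j2 ∈ I :=
    hI.2.2.2.1 _ hk0 _ hj2
  have key : G.cmul a₁ a₂ =
      G.cmul (G.cmul (e a₁) (e a₂))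
        (G.cmul (G.cmul (G.cmul (G.cinv (e a₂)) j1) (e a₂)) j2) := by
    conv_lhs => rw [ha1, ha2]
    simp only [G.cmul_assoc]
    rw [← G.cmul_assoc (e a₂) (G.cinv (e a₂)), G.cmul_cinv, G.one_cmul]
  obtain ⟨m, hm, hmeq⟩ := coset' (G.cmul (e a₁) (e a₂)) _ hk
  have hBprod : G.cmul (e a₁) (e a₂) ∈ B := hB.2.2.2.1 _ hb1 _ hb2
  exact G.factor_unique hB hI hint hb3 hBprod hi3 hm
    (hf3.symm.trans (key.trans hmeq))
end

section
/- Let (Y,*,∘) and (K,*,∘) be digroups, φ_* : (Y,*) → Aut(K,*) and φ_∘ : (Y,∘) → Aut(K,∘) group antihomomorphisms, and Λ : Y → Sym(K) a map with Λ_1 = id and Λ_y(1) = 1 for all y. Define on Y × K the operations (y,k) + (y',k') = (y * y', (Λ_{y*y'})⁻¹(φ_{*y'}(Λ_y(k)) * Λ_{y'}(k'))) and (y,k) ∘ (y',k') = (y ∘ y', φ_{∘y'}(k) ∘ k'). Then (Y × K, +, ∘) is a digroup, with identity (1,1). -/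
private lemma aux_inv_unique {T : Type*} (mul : T → T → T) (inv : T → T) (one : T)
    (assoc : ∀ a b c, mul (mul a b) c = mul a (mul b c))
    (one_mul : ∀ a, mul one a = a) (mul_one : ∀ a, mul a one = a)
    (inv_mul : ∀ a, mul (inv a) a = one)
    {a b : T} (h : mul a b = one) : b = inv a := by
  calc b = mul one b := (one_mul b).symm
    _ = mul (mul (inv a) a) b := by rw [inv_mul]
    _ = mul (inv a) (mul a b) := assoc ..
    _ = mul (inv a) one := by rw [h]
    _ = inv a := mul_one _

private lemma aux_idem {T : Type*} (mul : T → T → T) (inv : T → T) (one : T)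
    (assoc : ∀ a b c, mul (mul a b) c = mul a (mul b c))
    (one_mul : ∀ a, mul one a = a)
    (inv_mul : ∀ a, mul (inv a) a = one)
    {a : T} (h : mul a a = a) : a = one := by
  calc a = mul one a := (one_mul a).symm
    _ = mul (mul (inv a) a) a := by rw [inv_mul]
    _ = mul (inv a) (mul a a) := assoc ..
    _ = mul (inv a) a := by rw [h]
    _ = one := inv_mul a

/-- Outer semidirect product of digroups is a digroup (Theorem: outer semidirect product). -/
theorem outer_semidirect_digroup {Yt Kt : Type*} (Y : Digroup Yt) (K : Digroup Kt)
    (φs φc : Yt → Kt → Kt) (Λ Λi : Yt → Kt → Kt)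
    (hφs_bij : ∀ y, Function.Bijective (φs y))
    (hφs_hom : ∀ y k k', φs y (K.mul k k') = K.mul (φs y k) (φs y k'))
    (hφs_anti : ∀ y y' k, φs (Y.mul y y') k = φs y' (φs y k))
    (hφc_bij : ∀ y, Function.Bijective (φc y))
    (hφc_hom : ∀ y k k', φc y (K.cmul k k') = K.cmul (φc y k) (φc y k'))
    (hφc_anti : ∀ y y' k, φc (Y.cmul y y') k = φc y' (φc y k))
    (hΛ_bij : ∀ y, Function.Bijective (Λ y))
    (hΛi_l : ∀ y, Function.LeftInverse (Λi y) (Λ y))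
    (hΛi_r : ∀ y, Function.RightInverse (Λi y) (Λ y))
    (hΛ_one : ∀ k, Λ Y.one k = k) (hΛ_pt : ∀ y, Λ y K.one = K.one)
    (add circ : Yt × Kt → Yt × Kt → Yt × Kt)
    (hadd : ∀ p q, add p q =
      (Y.mul p.1 q.1, Λi (Y.mul p.1 q.1) (K.mul (φs q.1 (Λ p.1 p.2)) (Λ q.1 q.2))))
    (hcirc : ∀ p q, circ p q = (Y.cmul p.1 q.1, K.cmul (φc q.1 p.2) q.2)) :
    (∀ p q r, add (add p q) r = add p (add q r)) ∧
    (∀ p, add (Y.one, K.one) p = p) ∧ (∀ p, add p (Y.one, K.one) = p) ∧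
    (∀ p, ∃ q, add q p = (Y.one, K.one) ∧ add p q = (Y.one, K.one)) ∧
    (∀ p q r, circ (circ p q) r = circ p (circ q r)) ∧
    (∀ p, circ (Y.one, K.one) p = p) ∧ (∀ p, circ p (Y.one, K.one) = p) ∧
    (∀ p, ∃ q, circ q p = (Y.one, K.one) ∧ circ p q = (Y.one, K.one)) := by

  -- basic consequences
  have φs_one : ∀ y, φs y K.one = K.one := by
    intro y
    have h : K.mul (φs y K.one) (φs y K.one) = φs y K.one := by
      rw [← hφs_hom, K.mul_one]
    exact aux_idem K.mul K.inv K.one K.mul_assoc K.one_mul K.inv_mul h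
  have φc_one : ∀ y, φc y K.one = K.one := by
    intro y
    have h : K.cmul (φc y K.one) (φc y K.one) = φc y K.one := by
      rw [← hφc_hom, K.cmul_one]
    exact aux_idem K.cmul K.cinv K.one K.cmul_assoc K.one_cmul K.cinv_cmul h
  have φs_id : ∀ k, φs Y.one k = k := by
    intro k
    apply (hφs_bij Y.one).1
    rw [← hφs_anti, Y.mul_one]
  have φc_id : ∀ k, φc Y.one k = k := by
    intro k
    apply (hφc_bij Y.one).1
    rw [← hφc_anti, Y.cmul_one]
  have φs_inv : ∀ y k, φs y (K.inv k) = K.inv (φs y k) := by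
    intro y k
    refine aux_inv_unique K.mul K.inv K.one K.mul_assoc K.one_mul K.mul_one K.inv_mul ?_
    rw [← hφs_hom, K.mul_inv, φs_one]
  have φc_inv : ∀ y k, φc y (K.cinv k) = K.cinv (φc y k) := by
    intro y k
    refine aux_inv_unique K.cmul K.cinv K.one K.cmul_assoc K.one_cmul K.cmul_one
      K.cinv_cmul ?_
    rw [← hφc_hom, K.cmul_cinv, φc_one]
  have hLr : ∀ y k, Λ y (Λi y k) = k := fun y k => hΛi_r y k
  have hLl : ∀ y k, Λi y (Λ y k) = k := fun y k => hΛi_l y k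
  have Λi_one : ∀ k, Λi Y.one k = k := by
    intro k
    have := hΛi_l Y.one k
    rwa [hΛ_one] at this
  refine ⟨?_, ?_, ?_, ?_, ?_, ?_, ?_, ?_⟩
  · -- add associativity
    intro p q r
    simp only [hadd, hLr]
    refine Prod.ext (Y.mul_assoc ..) ?_
    simp only
    rw [Y.mul_assoc]
    congr 1
    rw [hφs_hom, hφs_anti, K.mul_assoc]
  · intro p
    simp only [hadd, hΛ_one, hΛ_pt, φs_one, Y.one_mul, K.one_mul, hLl]
  · intro p
    simp only [hadd, hΛ_one, hΛ_pt, φs_id, Y.mul_one, K.mul_one, hLl]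
  · intro p
    refine ⟨(Y.inv p.1, Λi (Y.inv p.1) (K.inv (φs (Y.inv p.1) (Λ p.1 p.2)))), ?_, ?_⟩
    · simp only [hadd, hLr, Y.inv_mul]
      refine Prod.ext rfl ?_
      simp only
      rw [φs_inv, ← hφs_anti, Y.inv_mul, φs_id, K.inv_mul, Λi_one]
    · simp only [hadd, hLr, Y.mul_inv]
      refine Prod.ext rfl ?_
      simp only
      rw [K.mul_inv, Λi_one]
  · -- circ associativity
    intro p q r
    simp only [hcirc]
    refine Prod.ext (Y.cmul_assoc ..) ?_
    simp only
    rw [hφc_hom, hφc_anti, K.cmul_assoc]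
  · intro p
    simp only [hcirc, φc_one, Y.one_cmul, K.one_cmul]
  · intro p
    simp only [hcirc, φc_id, Y.cmul_one, K.cmul_one]
  · intro p
    refine ⟨(Y.cinv p.1, K.cinv (φc (Y.cinv p.1) p.2)), ?_, ?_⟩
    · simp only [hcirc, Y.cinv_cmul]
      refine Prod.ext rfl ?_
      simp only
      rw [φc_inv, ← hφc_anti, Y.cinv_cmul, φc_id, K.cinv_cmul]
    · simp only [hcirc, Y.cmul_cinv]
      refine Prod.ext rfl ?_
      simp only
      rw [K.cmul_cinv]
end

section
/- Consider ℤ × ℤ with operations (y,k) * (y',k') = (y + y', k + (-1)^y k') and (y,k) ∘ (y',k') = (y + y', (-1)^{y'} k + (-1)^y k'). Then (ℤ × ℤ, *, ∘) is a left skew brace. -/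
/-- (-1)^y for y : ℤ. -/
def msign (y : ℤ) : ℤ := (((-1 : ℤˣ) ^ y : ℤˣ) : ℤ)

/-- (y,k) * (y',k') = (y + y', k + (-1)^y k') -/
def smul13 (p q : ℤ × ℤ) : ℤ × ℤ := (p.1 + q.1, p.2 + msign p.1 * q.2)

/-- (y,k) ∘ (y',k') = (y + y', (-1)^{y'} k + (-1)^y k') -/
def cmul13 (p q : ℤ × ℤ) : ℤ × ℤ := (p.1 + q.1, msign q.1 * p.2 + msign p.1 * q.2)

/-- The inverse of (y,k) with respect to *. -/
def sinv13 (p : ℤ × ℤ) : ℤ × ℤ := (-p.1, -(msign (-p.1) * p.2))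

lemma msign_add (a b : ℤ) : msign (a + b) = msign a * msign b := by
  simp [msign, zpow_add]

lemma msign_zero : msign 0 = 1 := by simp [msign]

lemma msign_neg (a : ℤ) : msign (-a) = msign a := by
  simp [msign, zpow_neg]

lemma msign_mul_self (a : ℤ) : msign a * msign a = 1 := by
  have h : ((-1 : ℤˣ) ^ a) * ((-1 : ℤˣ) ^ a) = 1 := by
    rw [← zpow_add, ← two_mul, zpow_mul]
    norm_num [zpow_two]
  simpa [msign] using congrArg (Units.val) h

/-- (ℤ × ℤ, *, ∘) with the above operations is a left skew brace. -/
theorem zxz_skew_brace :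
    (∀ p q r, smul13 (smul13 p q) r = smul13 p (smul13 q r)) ∧
    (∀ p, smul13 (0, 0) p = p) ∧ (∀ p, smul13 p (0, 0) = p) ∧
    (∀ p, smul13 (sinv13 p) p = (0, 0) ∧ smul13 p (sinv13 p) = (0, 0)) ∧
    (∀ p q r, cmul13 (cmul13 p q) r = cmul13 p (cmul13 q r)) ∧
    (∀ p, cmul13 (0, 0) p = p) ∧ (∀ p, cmul13 p (0, 0) = p) ∧
    (∀ p, ∃ q, cmul13 q p = (0, 0) ∧ cmul13 p q = (0, 0)) ∧
    (∀ a b c, cmul13 a (smul13 b c) =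
      smul13 (smul13 (cmul13 a b) (sinv13 a)) (cmul13 a c)) := by
  refine ⟨?_, ?_, ?_, ?_, ?_, ?_, ?_, ?_, ?_⟩
  · intro p q r
    ext <;> simp [smul13, msign_add] <;> ring
  · intro p; simp [smul13, msign_zero]
  · intro p; simp [smul13, msign_zero]
  · intro p
    constructor <;>
    · ext <;> simp [smul13, sinv13, msign_neg] <;>
      first
      | linear_combination p.2 * msign_mul_self p.1
      | linear_combination -p.2 * msign_mul_self p.1
  · intro p q r
    ext <;> simp [cmul13, msign_add] <;> ring
  · intro p; simp [cmul13, msign_zero]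
  · intro p; simp [cmul13, msign_zero]
  · intro p
    refine ⟨(-p.1, -p.2), ?_, ?_⟩ <;>
    · ext <;> simp [cmul13, msign_neg] <;> ring
  · intro a b c
    ext <;> simp [smul13, cmul13, sinv13, msign_add, msign_neg]
    · ring
    · linear_combination (msign b.1 * a.2) * msign_mul_self a.1
end

section
/- In a left skew brace (A,*,∘), the set Z = {z ∈ A : a * z = z * a, a ∘ z = z ∘ a, and a * z = a ∘ z for every a ∈ A} is a subgroup of both (A,*) and (A,∘), and for z ∈ Z and a ∈ A one has λ_a(z) = z (where λ_a(x) = a⁻* * (a ∘ x)); consequently a * Z = a ∘ Z for every a ∈ A, so Z is an ideal of A. -/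
namespace Digroup
variable {D : Type*} (G : Digroup D)

theorem inv_mul_cancel_left (a b : D) : G.mul (G.inv a) (G.mul a b) = b := by
  rw [← G.mul_assoc, G.inv_mul, G.one_mul]

theorem mul_inv_cancel_left_s19 (a b : D) : G.mul a (G.mul (G.inv a) b) = b := by
  rw [← G.mul_assoc, G.mul_inv, G.one_mul]

theorem cinv_cmul_cancel_left (a b : D) : G.cmul (G.cinv a) (G.cmul a b) = b := by
  rw [← G.cmul_assoc, G.cinv_cmul, G.one_cmul]

theorem cmul_cinv_cancel_left (a b : D) : G.cmul a (G.cmul (G.cinv a) b) = b := by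
  rw [← G.cmul_assoc, G.cmul_cinv, G.one_cmul]

theorem cinv_eq {a b : D} (h : G.cmul a b = G.one) : G.cinv a = b := by
  have h2 := congrArg (G.cmul (G.cinv a)) h
  rw [G.cinv_cmul_cancel_left, G.cmul_one] at h2
  exact h2.symm

end Digroup

/-- The center Z = {z : a*z = z*a, a∘z = z∘a, a*z = a∘z for all a} of a left skew
brace is a subgroup of both groups, satisfies λ_a(z) = z, and is an ideal. -/



theorem center_is_ideal {A : Type*} (G : Digroup A) (hsb : G.IsSkewBrace) :
    let Z : Set A := {z | ∀ a, G.mul a z = G.mul z a ∧ G.cmul a z = G.cmul z a ∧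
      G.mul a z = G.cmul a z}
    G.one ∈ Z ∧
    (∀ x ∈ Z, ∀ y ∈ Z, G.mul x y ∈ Z) ∧ (∀ x ∈ Z, G.inv x ∈ Z) ∧
    (∀ x ∈ Z, ∀ y ∈ Z, G.cmul x y ∈ Z) ∧ (∀ x ∈ Z, G.cinv x ∈ Z) ∧
    (∀ a, ∀ z ∈ Z, G.lam a z = z) ∧
    (∀ a, (fun z => G.mul a z) '' Z = (fun z => G.cmul a z) '' Z) ∧
    (∀ a, ∀ z ∈ Z, G.mul (G.mul a z) (G.inv a) ∈ Z) ∧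
    (∀ a, ∀ z ∈ Z, G.cmul (G.cmul a z) (G.cinv a) ∈ Z) := by
  intro Z
  -- projections of membership in Z
  have hconj : ∀ z ∈ Z, ∀ a, G.mul (G.mul a z) (G.inv a) = z := by
    intro z hz a
    have h1 : G.mul a z = G.mul z a := (hz a).1
    rw [h1, G.mul_assoc, G.mul_inv, G.mul_one]
  have hcconj : ∀ z ∈ Z, ∀ a, G.cmul (G.cmul a z) (G.cinv a) = z := by
    intro z hz a
    have h1 : G.cmul a z = G.cmul z a := (hz a).2.1
    rw [h1, G.cmul_assoc, G.cmul_cinv, G.cmul_one]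
  -- key: a ∘ z⁻¹ = z⁻¹ * a for z ∈ Z
  have hkey : ∀ z ∈ Z, ∀ a, G.cmul a (G.inv z) = G.mul (G.inv z) a := by
    intro z hz a
    have h1 := hsb a z (G.inv z)
    rw [G.mul_inv, G.cmul_one, ← (hz a).2.2, hconj z hz a] at h1
    -- h1 : a = G.mul z (G.cmul a (G.inv z))
    have h2 := congrArg (G.mul (G.inv z)) h1
    rw [G.inv_mul_cancel_left] at h2
    exact h2.symm
  -- cinv z = inv z for z ∈ Z
  have hcinv : ∀ z ∈ Z, G.cinv z = G.inv z := by
    intro z hz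
    exact G.cinv_eq (by rw [hkey z hz z, G.inv_mul])
  -- * commutation for inv z
  have hinvcomm : ∀ z ∈ Z, ∀ a, G.mul a (G.inv z) = G.mul (G.inv z) a := by
    intro z hz a
    calc G.mul a (G.inv z)
        = G.mul (G.inv z) (G.mul (G.mul z a) (G.inv z)) := by
          rw [← G.mul_assoc, ← G.mul_assoc, G.inv_mul, G.one_mul]
      _ = G.mul (G.inv z) (G.mul (G.mul a z) (G.inv z)) := by rw [← (hz a).1]
      _ = G.mul (G.inv z) a := by
          rw [G.mul_assoc a, G.mul_inv, G.mul_one]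
  -- closure of Z under mul
  have hmulmem : ∀ x ∈ Z, ∀ y ∈ Z, G.mul x y ∈ Z := by
    intro x hx y hy a
    refine ⟨?_, ?_, ?_⟩
    · calc G.mul a (G.mul x y)
          = G.mul (G.mul a x) y := (G.mul_assoc a x y).symm
        _ = G.mul (G.mul x a) y := by rw [(hx a).1]
        _ = G.mul x (G.mul y a) := by rw [G.mul_assoc, (hy a).1]
        _ = G.mul (G.mul x y) a := (G.mul_assoc x y a).symm
    · rw [(hy x).2.2]
      calc G.cmul a (G.cmul x y)
          = G.cmul (G.cmul a x) y := (G.cmul_assoc a x y).symm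
        _ = G.cmul (G.cmul x a) y := by rw [(hx a).2.1]
        _ = G.cmul x (G.cmul y a) := by rw [G.cmul_assoc, (hy a).2.1]
        _ = G.cmul (G.cmul x y) a := (G.cmul_assoc x y a).symm
    · symm
      calc G.cmul a (G.mul x y)
          = G.mul (G.mul (G.cmul a x) (G.inv a)) (G.cmul a y) := hsb a x y
        _ = G.mul (G.mul (G.mul a x) (G.inv a)) (G.mul a y) := by
            rw [← (hx a).2.2, ← (hy a).2.2]
        _ = G.mul x (G.mul a y) := by rw [hconj x hx a]
        _ = G.mul (G.mul x a) y := (G.mul_assoc x a y).symm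
        _ = G.mul (G.mul a x) y := by rw [← (hx a).1]
        _ = G.mul a (G.mul x y) := G.mul_assoc a x y
  -- closure of Z under inv
  have hinvmem : ∀ x ∈ Z, G.inv x ∈ Z := by
    intro z hz a
    refine ⟨hinvcomm z hz a, ?_, ?_⟩
    · have h2 : G.cmul (G.cinv z) a = G.cmul a (G.cinv z) := by
        calc G.cmul (G.cinv z) a
            = G.cmul (G.cinv z) (G.cmul (G.cmul a z) (G.cinv z)) := by
              rw [G.cmul_assoc a, G.cmul_cinv, G.cmul_one]
          _ = G.cmul (G.cinv z) (G.cmul (G.cmul z a) (G.cinv z)) := by rw [(hz a).2.1]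
          _ = G.cmul a (G.cinv z) := by
              rw [G.cmul_assoc z, G.cinv_cmul_cancel_left]
      rw [← hcinv z hz]
      exact h2.symm
    · rw [hkey z hz a, hinvcomm z hz a]
  -- everything assembled
  have hcmulmem : ∀ x ∈ Z, ∀ y ∈ Z, G.cmul x y ∈ Z := by
    intro x hx y hy
    rw [← (hy x).2.2]
    exact hmulmem x hx y hy
  have hcinvmem : ∀ x ∈ Z, G.cinv x ∈ Z := by
    intro x hx
    rw [hcinv x hx]
    exact hinvmem x hx
  have honemem : G.one ∈ Z := by
    intro a
    exact ⟨by rw [G.mul_one, G.one_mul], by rw [G.cmul_one, G.one_cmul],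
      by rw [G.mul_one, G.cmul_one]⟩
  refine ⟨honemem, hmulmem, hinvmem, hcmulmem, hcinvmem, ?_, ?_, ?_, ?_⟩
  · intro a z hz
    show G.mul (G.inv a) (G.cmul a z) = z
    rw [← (hz a).2.2, G.inv_mul_cancel_left]
  · intro a
    ext b
    simp only [Set.mem_image]
    constructor
    · rintro ⟨z, hzZ, rfl⟩
      exact ⟨z, hzZ, ((hzZ a).2.2).symm⟩
    · rintro ⟨z, hzZ, rfl⟩
      exact ⟨z, hzZ, (hzZ a).2.2⟩
  · intro a z hz
    rw [hconj z hz a]; exact hz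
  · intro a z hz
    rw [hcconj z hz a]; exact hz
end
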